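/- arXiv:2103.01595 — 5 statements merged into one kernel-verified Lean document; each statement's English description precedes it below -/
import Mathlib

section
/- Let η be a finite Borel measure on the circle T = R/Z and 0 < s < 1. Define the Riesz potential R_s η(x) = ∫ |x−y|^{−s} dη(y) (with distance on T), and define the measure θ by θ(A) = ∫_A (R_s η)^{−1} dη. Then for every Borel set U, θ(U) ≤ |U|^s, where |U| denotes the diameter of U. -/
open MeasureTheory ProbabilityTheory Filter Set
open scoped ENNReal Topology

attribute [local instance] ZeroLEOneClass.factZeroLtOne

noncomputable instance : IsProbabilityMeasure (volume : Measure UnitAddCircle) :=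
  ⟨UnitAddCircle.measure_univ⟩

/-- Riesz potential mass distribution: if `η` is a finite Borel measure on the circle,
`0 < s < 1`, and `θ` has density `(R_s η)⁻¹` with respect to `η`, then `θ U ≤ |U|^s`. -/
theorem stmt0 (η : Measure UnitAddCircle) [IsFiniteMeasure η]
    (s : ℝ) (hs0 : 0 < s) (hs1 : s < 1)
    (U : Set UnitAddCircle) (hU : MeasurableSet U) :
    ∫⁻ x in U, (∫⁻ y, (edist x y) ^ (-s) ∂η)⁻¹ ∂η ≤ (EMetric.diam U) ^ s := by
  set d : ℝ≥0∞ := EMetric.diam U with hd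
  -- lower bound on the Riesz potential at points of U
  have key : ∀ x ∈ U, d ^ (-s) * η U ≤ ∫⁻ y, (edist x y) ^ (-s) ∂η := by
    intro x hx
    calc d ^ (-s) * η U = ∫⁻ _ in U, d ^ (-s) ∂η := by
          rw [setLIntegral_const, mul_comm]
      _ ≤ ∫⁻ y in U, (edist x y) ^ (-s) ∂η := by
          refine setLIntegral_mono (by fun_prop) (fun y hy => ?_)
          rw [ENNReal.rpow_neg, ENNReal.rpow_neg]
          exact ENNReal.inv_le_inv.mpr
            (ENNReal.rpow_le_rpow (EMetric.edist_le_diam_of_mem hx hy) hs0.le)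
      _ ≤ ∫⁻ y, (edist x y) ^ (-s) ∂η := setLIntegral_le_lintegral _ _
  calc ∫⁻ x in U, (∫⁻ y, (edist x y) ^ (-s) ∂η)⁻¹ ∂η
      ≤ ∫⁻ _ in U, (d ^ (-s) * η U)⁻¹ ∂η := by
        refine setLIntegral_mono_ae (by fun_prop) ?_
        filter_upwards with x hx
        exact ENNReal.inv_le_inv.mpr (key x hx)
    _ = η U * (d ^ (-s) * η U)⁻¹ := by rw [setLIntegral_const, mul_comm]
    _ ≤ d ^ s := by
        rcases eq_or_ne (η U) 0 with h0 | h0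
        · simp [h0]
        rcases eq_or_ne d 0 with hd0 | hd0
        · rw [hd0, ENNReal.zero_rpow_of_neg (by linarith), ENNReal.top_mul h0]
          simp
        rcases eq_or_ne d ∞ with hdt | hdt
        · rw [hdt, ENNReal.top_rpow_of_pos hs0]
          exact le_top
        have hUfin : η U ≠ ∞ := measure_ne_top η U
        have h1 : d ^ (-s) ≠ 0 := by
          simp [ENNReal.rpow_eq_zero_iff, hd0, hdt, hs0.ne', hs0]
        have h2 : d ^ (-s) ≠ ∞ := by
          simp [ENNReal.rpow_eq_top_iff, hd0, hdt]
        rw [ENNReal.mul_inv (Or.inl h1) (Or.inl h2), ENNReal.rpow_neg, inv_inv,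
          mul_comm (d ^ s), ← mul_assoc, ENNReal.mul_inv_cancel h0 hUfin, one_mul]
end

section
/- Let (ω_n) be an i.i.d. sequence uniform on T and (r_n) a sequence of positive reals tending to 0. If ∑_{n≥1} n(1−r_n)^n < ∞, then almost surely there exists N such that for all n ≥ N the circle T is covered by the union of the balls B(ω_1, r_n), …, B(ω_n, r_n); consequently, almost surely every point y ∈ T satisfies: for all sufficiently large N there exists n ≤ N with ‖ω_n − y‖ < r_N. -/
open MeasureTheory ProbabilityTheory Filter Set
open scoped ENNReal Topology

lemma aux_pow (n : ℕ) (hn : 2 ≤ n) : (1/8 : ℝ) ≤ (1 - 1/(n:ℝ))^n := by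
  have hn' : (2:ℝ) ≤ (n:ℝ) := by exact_mod_cast hn
  set t : ℝ := 1/((n:ℝ)-1) with ht
  have ht0 : 0 < t := div_pos one_pos (by linarith)
  have h1 : Real.exp (-t) ≤ 1 - 1/(n:ℝ) := by
    have he : 1 + t ≤ Real.exp t := by linarith [Real.add_one_le_exp t]
    have hinv : (1 + t)⁻¹ = 1 - 1/(n:ℝ) := by
      have hne : (n:ℝ)-1 ≠ 0 := by linarith
      have h5 : 1 + t = (n:ℝ)/((n:ℝ)-1) := by rw [ht, eq_div_iff hne]; field_simp; ring
      rw [h5, inv_div]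
      field_simp
    rw [Real.exp_neg, ← hinv]
    exact inv_anti₀ (by linarith) he
  have h2 : Real.exp (-t) ^ n ≤ (1 - 1/(n:ℝ))^n :=
    pow_le_pow_left₀ (Real.exp_nonneg _) h1 n
  have h3 : Real.exp (-(2:ℝ)) ≤ Real.exp (-t) ^ n := by
    rw [← Real.exp_nat_mul]
    apply Real.exp_le_exp.mpr
    rw [ht]
    have hpos : (0:ℝ) < (n:ℝ) - 1 := by linarith
    rw [mul_neg, neg_le_neg_iff, mul_one_div, div_le_iff₀ hpos]
    linarith
  have h4 : (1/8 : ℝ) ≤ Real.exp (-2) := by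
    rw [Real.exp_neg, one_div, inv_le_inv₀ (by positivity) (by positivity)]
    have h := Real.exp_one_lt_d9
    calc Real.exp 2 = Real.exp 1 ^ 2 := by
          rw [← Real.exp_nat_mul]; norm_num
      _ ≤ (8:ℝ) := by nlinarith [Real.exp_pos 1]
  linarith

lemma grid (n : ℕ) (hn : 1 ≤ n) (y : UnitAddCircle) :
    ∃ j ∈ Finset.range n, dist y ((((j:ℝ) / (n:ℝ)) : ℝ) : UnitAddCircle) ≤ 1/(2*(n:ℝ)) := by
  obtain ⟨x, rfl⟩ := QuotientAddGroup.mk_surjective y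
  have hn0 : (0:ℝ) < (n:ℝ) := by exact_mod_cast hn
  have hnz : (n:ℤ) ≠ 0 := by exact_mod_cast hn0.ne'
  set k : ℤ := round ((n:ℝ) * x) with hk
  have h0 : 0 ≤ k % (n:ℤ) := Int.emod_nonneg k hnz
  have h1 : k % (n:ℤ) < (n:ℤ) := Int.emod_lt_of_pos k (by exact_mod_cast hn0)
  refine ⟨(k % (n:ℤ)).toNat, Finset.mem_range.mpr (by omega), ?_⟩
  -- the two grid points coincide on the circle
  have hcoe : ((((k % (n:ℤ)).toNat : ℝ) / (n:ℝ)) : UnitAddCircle) = (((k:ℝ)/(n:ℝ) : ℝ) : UnitAddCircle) := by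
    have hdiff : ((k:ℝ)/(n:ℝ)) - (((k % (n:ℤ)).toNat : ℝ) / (n:ℝ)) = ((k / (n:ℤ) : ℤ) : ℝ) := by
      have hnat : (((k % (n:ℤ)).toNat : ℕ) : ℝ) = ((k % (n:ℤ) : ℤ) : ℝ) := by
        exact_mod_cast congrArg (Int.cast : ℤ → ℝ) (Int.toNat_of_nonneg h0)
      have : ((k:ℝ)) - (((k % (n:ℤ)).toNat : ℝ)) = ((k / (n:ℤ) : ℤ) : ℝ) * (n:ℝ) := by
        have h6 := Int.mul_ediv_add_emod k (n:ℤ)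
        rw [hnat]
        have h7 : (((n:ℤ) * (k / (n:ℤ)) + k % (n:ℤ) : ℤ) : ℝ) = ((k:ℤ) : ℝ) := by
          exact_mod_cast congrArg (Int.cast : ℤ → ℝ) h6
        push_cast at h7
        linarith [h7, mul_comm ((n:ℝ)) (((k / (n:ℤ) : ℤ)) : ℝ)]
      field_simp
      linarith [this]
    have : ((((k:ℝ)/(n:ℝ) : ℝ)) : UnitAddCircle) - ((((k % (n:ℤ)).toNat : ℝ) / (n:ℝ) : ℝ) : UnitAddCircle) = 0 := by
      rw [← AddCircle.coe_sub, hdiff]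
      have : (((k / (n:ℤ) : ℤ) : ℝ) : UnitAddCircle) = ((k / (n:ℤ) : ℤ)) • (((1:ℝ) : UnitAddCircle)) := by
        rw [← AddCircle.coe_zsmul]
        norm_num
      rw [this, AddCircle.coe_period, smul_zero]
    exact (sub_eq_zero.mp this).symm
  rw [hcoe]
  have hle : dist ((x : UnitAddCircle)) (((k:ℝ)/(n:ℝ) : ℝ) : UnitAddCircle) ≤ |x - (k:ℝ)/(n:ℝ)| := by
    rw [dist_eq_norm, ← AddCircle.coe_sub]
    simpa [Real.norm_eq_abs] using QuotientAddGroup.norm_mk_le_norm (S := AddSubgroup.zmultiples (1:ℝ)) (m := x - (k:ℝ)/(n:ℝ))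
  refine hle.trans ?_
  have hx : x - (k:ℝ)/(n:ℝ) = ((n:ℝ)*x - (k:ℝ))/(n:ℝ) := by field_simp
  rw [hx, abs_div, abs_of_pos hn0]
  have hr : |(n:ℝ)*x - (k:ℝ)| ≤ 1/2 := by
    rw [hk]
    exact abs_sub_round _
  rw [div_le_div_iff₀ hn0 (by positivity)]
  calc |(n:ℝ)*x - (k:ℝ)| * (2*(n:ℝ)) ≤ (1/2) * (2*(n:ℝ)) := by
        apply mul_le_mul_of_nonneg_right hr (by positivity)
    _ = 1 * (n:ℝ) := by ring

lemma avoid_vol (c : UnitAddCircle) {ρ : ℝ} (hρ : 0 < ρ) :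
    volume ((Metric.ball c ρ)ᶜ) = 1 - ENNReal.ofReal (min 1 (2*ρ)) := by
  rw [measure_compl Metric.isOpen_ball.measurableSet (measure_ne_top _ _), measure_univ]
  congr 1
  rw [measure_congr AddCircle.closedBall_ae_eq_ball.symm, AddCircle.volume_closedBall]

set_option maxHeartbeats 1000000 in
/-- If `∑ n (1 - r_n)^n < ∞`, then almost surely the circle is eventually covered by
`B(ω_1, r_n), …, B(ω_n, r_n)`; consequently a.s. every point is uniformly approximated. -/
theorem stmt4 {Ω : Type*} [MeasurableSpace Ω] (μ : Measure Ω) [IsProbabilityMeasure μ]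
    (ω : ℕ → Ω → UnitAddCircle) (hmeas : ∀ n, Measurable (ω n))
    (hindep : iIndepFun ω μ)
    (hunif : ∀ n, Measure.map (ω n) μ = volume)
    (r : ℕ → ℝ) (hrpos : ∀ n, 1 ≤ n → 0 < r n) (hrlim : Tendsto r atTop (𝓝 0))
    (hsum : Summable (fun n : ℕ => (n : ℝ) * (1 - r n) ^ n)) :
    ∀ᵐ a ∂μ,
      (∃ N : ℕ, ∀ n ≥ N, ∀ y : UnitAddCircle, ∃ k ∈ Finset.Icc 1 n, dist (ω k a) y < r n) ∧
      (∀ y : UnitAddCircle, ∀ᶠ N in atTop, ∃ n ∈ Finset.Icc 1 N, dist (ω n a) y < r N) := by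
  classical
  set A : ℕ → Set Ω :=
    fun n => {a | ∃ y : UnitAddCircle, ∀ k ∈ Finset.Icc 1 n, r n ≤ dist (ω k a) y} with hA
  -- good indices
  have hgood : ∀ᶠ (n : ℕ) in atTop, 2 ≤ n ∧ r n ≤ 1 ∧ 1/(n:ℝ) ≤ r n := by
    have h1 : ∀ᶠ n in atTop, r n ≤ 1 := hrlim.eventually_le_const (show (0:ℝ) < 1 by norm_num)
    have h2 : ∀ᶠ (n : ℕ) in atTop, (n:ℝ) * (1 - r n)^n < 1/8 := by
      exact hsum.tendsto_atTop_zero.eventually_lt_const (show (0:ℝ) < 1/8 by norm_num)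
    filter_upwards [h1, h2, eventually_ge_atTop 2] with n hr1 hterm hn2
    refine ⟨hn2, hr1, ?_⟩
    by_contra h
    push_neg at h
    have hn' : (2:ℝ) ≤ (n:ℝ) := by exact_mod_cast hn2
    have hn0 : (0:ℝ) < (n:ℝ) := by linarith
    have h0 : (0:ℝ) ≤ 1 - 1/(n:ℝ) := by
      have : 1/(n:ℝ) ≤ 1 := by rw [div_le_one hn0]; linarith
      linarith
    have hb : (1 - 1/(n:ℝ))^n ≤ (1 - r n)^n := pow_le_pow_left₀ h0 (by linarith) n
    have h18 : (1/8:ℝ) ≤ (1 - r n)^n := le_trans (aux_pow n hn2) hb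
    nlinarith
  obtain ⟨N₀, hN₀⟩ := eventually_atTop.mp hgood
  -- key bound
  have key : ∀ n ≥ N₀, μ (A n) ≤ ENNReal.ofReal ((n:ℝ) * (1 - r n)^n) := by
    intro n hn
    obtain ⟨hn2, hr1, hrn⟩ := hN₀ n hn
    have hn1 : 1 ≤ n := by omega
    have hrp : 0 < r n := hrpos n hn1
    have hn0 : (0:ℝ) < (n:ℝ) := by exact_mod_cast Nat.lt_of_lt_of_le Nat.zero_lt_two hn2
    set c : ℕ → UnitAddCircle := fun j => ((((j:ℝ) / (n:ℝ)) : ℝ) : UnitAddCircle) with hc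
    have hsub : A n ⊆ ⋃ j ∈ Finset.range n, ⋂ k ∈ Finset.Icc 1 n,
        (ω k) ⁻¹' ((Metric.ball (c j) (r n / 2))ᶜ) := by
      rintro a ⟨y, hy⟩
      obtain ⟨j, hj, hdist⟩ := grid n hn1 y
      refine mem_iUnion₂.mpr ⟨j, hj, mem_iInter₂.mpr fun k hk => ?_⟩
      simp only [mem_preimage, mem_compl_iff, Metric.mem_ball, not_lt]
      have h1 := hy k hk
      have h3 : 1/(2*(n:ℝ)) ≤ r n / 2 := by
        rw [div_le_div_iff₀ (by positivity) (by norm_num)]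
        calc 1 * 2 = (1/(n:ℝ)) * (2 * n) := by field_simp
          _ ≤ r n * (2 * n) := by
              apply mul_le_mul_of_nonneg_right hrn (by positivity)
      have h4 := dist_triangle (ω k a) y (c j)
      have h5 : dist y (c j) ≤ r n / 2 := le_trans hdist h3
      have := dist_triangle (ω k a) (c j) y
      have hyd : dist (c j) y = dist y (c j) := dist_comm _ _
      linarith [dist_triangle (ω k a) (c j) y, dist_comm y (c j) ▸ h5]
    have hfac : ∀ k : ℕ, ∀ j : ℕ,
        μ ((ω k) ⁻¹' ((Metric.ball (c j) (r n / 2))ᶜ)) = ENNReal.ofReal (1 - r n) := by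
      intro k j
      rw [← Measure.map_apply (hmeas k) Metric.isOpen_ball.measurableSet.compl, hunif k,
        avoid_vol _ (by positivity)]
      have : min 1 (2*(r n/2)) = r n := by
        rw [min_eq_right]; ring_nf; linarith
      rw [this, ← ENNReal.ofReal_one, ← ENNReal.ofReal_sub _ hrp.le]
    calc μ (A n) ≤ μ (⋃ j ∈ Finset.range n, ⋂ k ∈ Finset.Icc 1 n,
          (ω k) ⁻¹' ((Metric.ball (c j) (r n / 2))ᶜ)) := measure_mono hsub
      _ ≤ ∑ j ∈ Finset.range n, μ (⋂ k ∈ Finset.Icc 1 n,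
          (ω k) ⁻¹' ((Metric.ball (c j) (r n / 2))ᶜ)) := measure_biUnion_finset_le _ _
      _ = ∑ j ∈ Finset.range n, ∏ k ∈ Finset.Icc 1 n,
          μ ((ω k) ⁻¹' ((Metric.ball (c j) (r n / 2))ᶜ)) := by
          refine Finset.sum_congr rfl fun j _ => ?_
          exact hindep.meas_biInter fun k _ =>
            ⟨(Metric.ball (c j) (r n / 2))ᶜ, Metric.isOpen_ball.measurableSet.compl, rfl⟩
      _ = ∑ j ∈ Finset.range n, ∏ k ∈ Finset.Icc 1 n, ENNReal.ofReal (1 - r n) := by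
          refine Finset.sum_congr rfl fun j _ => Finset.prod_congr rfl fun k _ => hfac k j
      _ = (n : ℝ≥0∞) * ENNReal.ofReal (1 - r n) ^ n := by
          simp [Finset.prod_const, Nat.card_Icc, mul_comm]
      _ = ENNReal.ofReal ((n:ℝ) * (1 - r n)^n) := by
          rw [ENNReal.ofReal_mul (by positivity), ← ENNReal.ofReal_pow (by linarith),
            ENNReal.ofReal_natCast]
  -- Borel-Cantelli
  have hnn : ∀ m : ℕ, 0 ≤ ((m + N₀ : ℕ):ℝ) * (1 - r (m + N₀))^(m + N₀) := by
    intro m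
    obtain ⟨_, hr1, _⟩ := hN₀ (m + N₀) (Nat.le_add_left _ _)
    exact mul_nonneg (Nat.cast_nonneg _) (pow_nonneg (by linarith) _)
  have hsum' : Summable (fun m : ℕ => ((m + N₀ : ℕ):ℝ) * (1 - r (m + N₀))^(m + N₀)) :=
    (summable_nat_add_iff N₀).mpr hsum
  have htsum : (∑' m : ℕ, μ (A (m + N₀))) ≠ ∞ := by
    refine ne_top_of_le_ne_top ?_ (ENNReal.tsum_le_tsum fun m => key _ (Nat.le_add_left _ _))
    rw [← ENNReal.ofReal_tsum_of_nonneg hnn hsum']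
    exact ENNReal.ofReal_ne_top
  have hBC : ∀ᵐ a ∂μ, ∀ᶠ m in atTop, a ∉ A (m + N₀) := ae_eventually_notMem htsum
  filter_upwards [hBC] with a ha
  obtain ⟨M, hM⟩ := eventually_atTop.mp ha
  have hcov : ∀ n ≥ M + N₀, ∀ y : UnitAddCircle, ∃ k ∈ Finset.Icc 1 n, dist (ω k a) y < r n := by
    intro n hn y
    have hmem := hM (n - N₀) (by omega)
    rw [Nat.sub_add_cancel (by omega)] at hmem
    by_contra h
    push_neg at h
    exact hmem ⟨y, fun k hk => h k hk⟩
  exact ⟨⟨M + N₀, hcov⟩, fun y => eventually_atTop.mpr ⟨M + N₀, fun N hN => hcov N hN y⟩⟩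
end

section
/- Let (ω_n) be i.i.d. uniform on T and let (r_n) be a decreasing sequence of positive reals. Then the event {Lebesgue measure of U(ω) equals 1} has probability 0 or 1; equivalently, either almost surely λ(U(ω)) = 1 or almost surely λ(U(ω)) = 0. -/
open MeasureTheory ProbabilityTheory Filter Set
open scoped ENNReal Topology

attribute [local instance] ZeroLEOneClass.factZeroLtOne

set_option linter.unusedSectionVars false

section Aux

variable {Ω : Type*} [MeasurableSpace Ω] (μ : Measure Ω) [IsProbabilityMeasure μ]
  (ω : ℕ → Ω → UnitAddCircle)

lemma jointLaw (hmeas : ∀ n, Measurable (ω n))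
    (hindep : iIndepFun ω μ)
    (hunif : ∀ n, Measure.map (ω n) μ = volume) (K : ℕ) :
    Measure.map (fun a (i : Fin K) => ω i a) μ
      = Measure.pi (fun _ : Fin K => (volume : Measure UnitAddCircle)) := by
  have hV : Measurable fun a (i : Fin K) => ω i a :=
    measurable_pi_lambda _ fun i => hmeas i
  refine (Measure.pi_eq fun s hs => ?_).symm
  rw [Measure.map_apply hV (MeasurableSet.univ_pi hs)]
  classical
  set s' : ℕ → Set UnitAddCircle := fun n => if h : n < K then s ⟨n, h⟩ else Set.univ with hs'
  have hms' : ∀ n, MeasurableSet (s' n) := by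
    intro n
    by_cases h : n < K
    · simpa [s', dif_pos h] using hs ⟨n, h⟩
    · simp [s', dif_neg h]
  have hpre : (fun a (i : Fin K) => ω i a) ⁻¹' Set.pi Set.univ s
      = ⋂ n ∈ Finset.range K, ω n ⁻¹' s' n := by
    ext a
    simp only [Set.mem_preimage, Set.mem_pi, Set.mem_univ, forall_true_left, Set.mem_iInter,
      Finset.mem_range]
    constructor
    · intro h n hn
      simpa [s', dif_pos hn] using h ⟨n, hn⟩
    · intro h i
      simpa [s', dif_pos i.isLt] using h i i.isLt
  rw [hpre]
  rw [hindep.meas_biInter (fun n _ => ⟨s' n, hms' n, rfl⟩)]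
  have hval : ∀ n, μ (ω n ⁻¹' s' n) = volume (s' n) := fun n => by
    rw [← Measure.map_apply (hmeas n) (hms' n), hunif n]
  rw [Finset.prod_congr rfl fun n _ => hval n,
    ← Fin.prod_univ_eq_prod_range (fun n => (volume : Measure UnitAddCircle) (s' n)) K]
  refine Finset.prod_congr rfl fun i _ => ?_
  simp [s', dif_pos i.isLt]

lemma measure_const_in_y (hmeas : ∀ n, Measurable (ω n))
    (hindep : iIndepFun ω μ)
    (hunif : ∀ n, Measure.map (ω n) μ = volume) (r : ℕ → ℝ) (y y' : UnitAddCircle) :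
    μ {a | ∀ᶠ N in atTop, ∃ n ∈ Finset.Icc 1 N, dist (ω n a) y < r N}
      = μ {a | ∀ᶠ N in atTop, ∃ n ∈ Finset.Icc 1 N, dist (ω n a) y' < r N} := by
  -- the basic finite-time events
  set C : UnitAddCircle → ℕ → Set Ω :=
    fun z N => {a | ∃ n ∈ Finset.Icc 1 N, dist (ω n a) z < r N} with hC
  have hCmeas : ∀ z N, MeasurableSet (C z N) := by
    intro z N
    have : C z N = ⋃ n ∈ Finset.Icc 1 N, {a | dist (ω n a) z < r N} := by
      ext a; simp [C]
    rw [this]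
    exact MeasurableSet.biUnion (Finset.Icc 1 N).countable_toSet
      fun n _ => measurableSet_lt ((hmeas n).dist measurable_const) measurable_const
  set D : UnitAddCircle → ℕ → ℕ → Set Ω :=
    fun z M K => ⋂ N ∈ Finset.Icc M K, C z N with hD
  have hDmeas : ∀ z M K, MeasurableSet (D z M K) := fun z M K =>
    MeasurableSet.biInter (Finset.Icc M K).countable_toSet fun N _ => hCmeas z N
  have hDanti : ∀ z M, Antitone (D z M) := by
    intro z M K K' hKK'
    refine Set.iInter₂_mono' fun N hN => ⟨N, ?_, subset_rfl⟩
    rw [Finset.mem_Icc] at hN ⊢; omega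
  -- decomposition of the event
  have hAeq : ∀ z, {a | ∀ᶠ N in atTop, ∃ n ∈ Finset.Icc 1 N, dist (ω n a) z < r N}
      = ⋃ M, ⋂ K, D z M K := by
    intro z
    ext a
    rw [Set.mem_iUnion]
    simp only [Set.mem_setOf_eq, eventually_atTop]
    constructor
    · rintro ⟨M, hM⟩
      exact ⟨M, Set.mem_iInter.mpr fun K =>
        Set.mem_iInter₂.mpr fun N hN => hM N (Finset.mem_Icc.mp hN).1⟩
    · rintro ⟨M, hM⟩
      exact ⟨M, fun N hN => Set.mem_iInter₂.mp (Set.mem_iInter.mp hM N) N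
        (Finset.mem_Icc.mpr ⟨hN, le_rfl⟩)⟩
  -- measure as a double limit
  have hmeasA : ∀ z, μ {a | ∀ᶠ N in atTop, ∃ n ∈ Finset.Icc 1 N, dist (ω n a) z < r N}
      = ⨆ M, ⨅ K, μ (D z M K) := by
    intro z
    rw [hAeq z]
    have hmono : Monotone fun M => ⋂ K, D z M K := by
      intro M M' hMM'
      refine Set.iInter_mono fun K => Set.iInter₂_mono' fun N hN => ⟨N, ?_, subset_rfl⟩
      rw [Finset.mem_Icc] at hN ⊢; omega
    rw [Monotone.measure_iUnion hmono]
    refine iSup_congr fun M => ?_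
    rw [Directed.measure_iInter (fun K => (hDmeas z M K).nullMeasurableSet)
      ((hDanti z M).directed_ge) ⟨0, measure_ne_top μ _⟩]
  -- reduction to the finite-dimensional statement
  rw [hmeasA y, hmeasA y']
  refine iSup_congr fun M => iInf_congr fun K => ?_
  -- finite-dimensional event
  set t : UnitAddCircle := y - y' with ht
  have hdist : ∀ x : UnitAddCircle, dist (x + t) y = dist x y' := by
    intro x
    conv_lhs => rw [show y = y' + t by rw [ht]; abel]
    exact dist_add_right x y' t
  set B : UnitAddCircle → Set (Fin (K + 1) → UnitAddCircle) := fun z =>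
    ⋂ N ∈ Finset.Icc M K, ⋃ n : Fin (K + 1), ⋃ _ : 1 ≤ (n : ℕ) ∧ (n : ℕ) ≤ N,
      {v | dist (v n) z < r N} with hB
  have hBmeas : ∀ z, MeasurableSet (B z) := fun z =>
    MeasurableSet.biInter (Finset.Icc M K).countable_toSet fun N _ =>
      MeasurableSet.iUnion fun n => MeasurableSet.iUnion fun _ =>
        measurableSet_lt ((measurable_pi_apply n).dist measurable_const) measurable_const
  have hVmeas : Measurable fun a (i : Fin (K + 1)) => ω i a :=
    measurable_pi_lambda _ fun i => hmeas i
  have hpre : ∀ z, (fun a (i : Fin (K + 1)) => ω i a) ⁻¹' B z = D z M K := by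
    intro z
    ext a
    simp only [Set.mem_preimage, B, D, C, Set.mem_iInter, Set.mem_iUnion, Set.mem_setOf_eq]
    refine forall_congr' fun N => ?_
    refine imp_congr_right fun hN => ?_
    have hNK : N ≤ K := (Finset.mem_Icc.mp hN).2
    constructor
    · rintro ⟨n, ⟨h1, h2⟩, hd⟩
      exact ⟨(n : ℕ), Finset.mem_Icc.mpr ⟨h1, h2⟩, hd⟩
    · rintro ⟨n, hn, hd⟩
      rw [Finset.mem_Icc] at hn
      exact ⟨⟨n, by omega⟩, ⟨hn.1, hn.2⟩, hd⟩
  have h1 : ∀ z, μ (D z M K) = Measure.pi (fun _ : Fin (K + 1) => volume) (B z) := by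
    intro z
    rw [← hpre z, ← Measure.map_apply hVmeas (hBmeas z),
      jointLaw μ ω hmeas hindep hunif (K + 1)]
  have hτ : MeasurePreserving (fun v : Fin (K + 1) → UnitAddCircle => fun i => v i + t)
      (Measure.pi fun _ => volume) (Measure.pi fun _ => volume) :=
    measurePreserving_pi _ _ fun _ => measurePreserving_add_right volume t
  have hBpre : (fun v : Fin (K + 1) → UnitAddCircle => fun i => v i + t) ⁻¹' B y = B y' := by
    ext v
    simp only [Set.mem_preimage, B, Set.mem_iInter, Set.mem_iUnion, Set.mem_setOf_eq]
    refine forall_congr' fun N => imp_congr_right fun _ => exists_congr fun n =>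
      exists_congr fun _ => ?_
    rw [hdist]
  rw [h1 y, h1 y', ← hBpre, hτ.measure_preimage (hBmeas y).nullMeasurableSet]

lemma zeroOne (hmeas : ∀ n, Measurable (ω n))
    (hindep : iIndepFun ω μ)
    (hunif : ∀ n, Measure.map (ω n) μ = volume)
    (r : ℕ → ℝ) (hrpos : ∀ n, 1 ≤ n → 0 < r n) (hrdec : Antitone r) (y : UnitAddCircle) :
    μ {a | ∀ᶠ N in atTop, ∃ n ∈ Finset.Icc 1 N, dist (ω n a) y < r N} = 0 ∨
      μ {a | ∀ᶠ N in atTop, ∃ n ∈ Finset.Icc 1 N, dist (ω n a) y < r N} = 1 := by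
  classical
  have hrpos' : ∀ n, 0 < r n := fun n =>
    lt_of_lt_of_le (hrpos (n + 1) (Nat.le_add_left 1 n)) (hrdec (Nat.le_succ n))
  set L : ℝ := ⨅ n, r n with hLdef
  have hbdd : BddBelow (Set.range r) := ⟨0, by rintro x ⟨n, rfl⟩; exact (hrpos' n).le⟩
  have hL0 : 0 ≤ L := le_ciInf fun n => (hrpos' n).le
  have hLle : ∀ n, L ≤ r n := fun n => ciInf_le hbdd n
  rcases hL0.lt_or_eq with hL | hL
  · -- case `L > 0` : the event has full measure
    right
    set s : ℕ → Set Ω := fun n => ω (n + 1) ⁻¹' Metric.ball y L with hs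
    have hsm : ∀ n, MeasurableSet (s n) := fun n => (hmeas (n + 1)) measurableSet_ball
    have hval : ∀ n, μ (s n) = volume (Metric.ball y L) := fun n => by
      rw [hs, ← Measure.map_apply (hmeas (n + 1)) measurableSet_ball, hunif (n + 1)]
    have hindepSet : iIndepSet s μ := by
      rw [iIndepSet_iff_meas_biInter hsm]
      intro S
      have himg : ⋂ i ∈ S, s i = ⋂ n ∈ S.image (· + 1), ω n ⁻¹' Metric.ball y L := by
        ext a
        simp only [Set.mem_iInter, Finset.mem_image, s]
        constructor
        · rintro h n ⟨i, hi, rfl⟩; exact h i hi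
        · intro h i hi; exact h (i + 1) ⟨i, hi, rfl⟩
      rw [himg, hindep.meas_biInter
        (fun n _ => ⟨Metric.ball y L, measurableSet_ball, rfl⟩),
        Finset.prod_image (fun a _ b _ h => by omega)]
    have hcpos : volume (Metric.ball y L) ≠ 0 := by
      have hsub : Metric.closedBall y (L / 2) ⊆ Metric.ball y L :=
        Metric.closedBall_subset_ball (by linarith)
      have : (0 : ℝ≥0∞) < volume (Metric.closedBall y (L / 2)) := by
        rw [AddCircle.volume_closedBall]
        refine ENNReal.ofReal_pos.mpr ?_
        rw [lt_min_iff]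
        constructor <;> linarith
      exact fun h0 => absurd ((measure_mono hsub).trans_eq h0) this.not_ge
    have hsum : (∑' n, μ (s n)) = ∞ := by
      rw [tsum_congr hval]
      exact ENNReal.tsum_const_eq_top_of_ne_zero hcpos
    have h1 : μ (limsup s atTop) = 1 := measure_limsup_eq_one hsm hindepSet hsum
    have hsub : limsup s atTop ⊆
        {a | ∀ᶠ N in atTop, ∃ n ∈ Finset.Icc 1 N, dist (ω n a) y < r N} := by
      intro a ha
      rw [mem_limsup_iff_frequently_mem] at ha
      obtain ⟨n, hn⟩ := ha.exists
      have hd : dist (ω (n + 1) a) y < L := Metric.mem_ball.mp hn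
      rw [Set.mem_setOf_eq]
      filter_upwards [eventually_ge_atTop (n + 1)] with N hN
      exact ⟨n + 1, Finset.mem_Icc.mpr ⟨Nat.le_add_left 1 n, hN⟩, hd.trans_le (hLle N)⟩
    exact le_antisymm prob_le_one (h1 ▸ measure_mono hsub)
  · -- case `L = 0` : Kolmogorov's zero-one law
    have rtendsto : Tendsto r atTop (𝓝 0) := by
      have := tendsto_atTop_ciInf hrdec hbdd
      rwa [← hLdef, ← hL] at this
    set E : ℕ → Set Ω :=
      fun k => {a | ∀ᶠ N in atTop, ∃ n ∈ Finset.Icc (k + 1) N, dist (ω n a) y < r N} with hE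
    have hEanti : Antitone E := by
      intro k k' hkk' a ha
      refine ha.mono fun N hN => ?_
      obtain ⟨n, hn, hd⟩ := hN
      rw [Finset.mem_Icc] at hn
      exact ⟨n, Finset.mem_Icc.mpr ⟨by omega, hn.2⟩, hd⟩
    have htar : {a | ∀ᶠ N in atTop, ∃ n ∈ Finset.Icc 1 N, dist (ω n a) y < r N} = E 0 := rfl
    have hnull : ∀ n, μ {a | ω n a = y} = 0 := by
      intro n
      have h1 : {a | ω n a = y} = ω n ⁻¹' {y} := rfl
      have h2 : ({y} : Set UnitAddCircle) = Metric.closedBall y 0 := by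
        rw [Metric.closedBall_zero]
      rw [h1, ← Measure.map_apply (hmeas n) (measurableSet_singleton y), hunif n, h2,
        AddCircle.volume_closedBall]
      norm_num
    have hdiff : E 0 \ (⋂ k, E k) ⊆ ⋃ n, {a | ω n a = y} := by
      rintro a ⟨haA, haI⟩
      rw [Set.mem_iInter, not_forall] at haI
      obtain ⟨k, hk⟩ := haI
      have hfreq : ∃ᶠ N in atTop, ∀ n ∈ Finset.Icc (k + 1) N, ¬dist (ω n a) y < r N := by
        rw [hE, Set.mem_setOf_eq, not_eventually] at hk
        refine hk.mono fun N hN => ?_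
        push_neg at hN
        exact fun n hn => not_lt.mpr (hN n hn)
      have hfreq2 : ∃ᶠ N in atTop, ∃ n ∈ Finset.Icc 1 k, dist (ω n a) y < r N := by
        refine (hfreq.and_eventually haA).mono ?_
        rintro N ⟨h1, h2⟩
        obtain ⟨n, hn, hd⟩ := h2
        rw [Finset.mem_Icc] at hn
        refine ⟨n, Finset.mem_Icc.mpr ⟨hn.1, ?_⟩, hd⟩
        by_contra hnk
        exact h1 n (Finset.mem_Icc.mpr ⟨by omega, hn.2⟩) hd
      have hpigeon : ∃ n ∈ Finset.Icc 1 k, ∃ᶠ N in atTop, dist (ω n a) y < r N := by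
        by_contra h
        push_neg at h
        have hev : ∀ᶠ N in atTop, ∀ n ∈ Finset.Icc 1 k, ¬dist (ω n a) y < r N :=
          (eventually_all_finset _).mpr fun n hn => (h n hn).mono fun N hN => not_lt.mpr hN
        obtain ⟨N, ⟨n, hn, hd⟩, hall⟩ := (hfreq2.and_eventually hev).exists
        exact hall n hn hd
      obtain ⟨n, _, hfr⟩ := hpigeon
      refine Set.mem_iUnion.mpr ⟨n, ?_⟩
      have hd0 : dist (ω n a) y ≤ 0 := by
        by_contra hpos
        push_neg at hpos
        have hev : ∀ᶠ N in atTop, r N < dist (ω n a) y :=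
          rtendsto.eventually_lt_const hpos
        obtain ⟨N, h1, h2⟩ := (hfr.and_eventually hev).exists
        exact absurd h1 (not_lt.mpr h2.le)
      exact dist_le_zero.mp hd0
    have hae : (E 0 : Set Ω) =ᵐ[μ] ⋂ k, E k := by
      refine (ae_eq_set.mpr ⟨?_, ?_⟩)
      · exact measure_mono_null hdiff (measure_iUnion_null fun n => hnull n)
      · have : (⋂ k, E k) \ E 0 = ∅ := Set.diff_eq_empty.mpr (Set.iInter_subset E 0)
        simp [this]
    rw [htar, measure_congr hae]
    -- tail measurability
    have ht_tail : MeasurableSet[limsup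
        (fun n => MeasurableSpace.comap (ω n) inferInstance) atTop] (⋂ k, E k) := by
      rw [limsup_eq_iInf_iSup_of_nat]
      refine MeasurableSpace.measurableSet_iInf.mpr fun k => ?_
      have hEq : (⋂ j, E j) = ⋂ j, E (j + k) := by
        apply Set.Subset.antisymm
        · exact Set.iInter_mono' fun j => ⟨j + k, subset_rfl⟩
        · exact Set.iInter_mono' fun j => ⟨j, hEanti (Nat.le_add_right j k)⟩
      rw [hEq]
      refine MeasurableSet.iInter fun j => ?_
      have hEme : E (j + k) = ⋃ M, ⋂ N, ⋂ (_ : M ≤ N),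
          ⋃ n ∈ Finset.Icc (j + k + 1) N, ω n ⁻¹' Metric.ball y (r N) := by
        ext a
        simp only [hE, Set.mem_setOf_eq, eventually_atTop, Set.mem_iUnion, Set.mem_iInter,
          Set.mem_preimage, Metric.mem_ball]
        constructor
        · rintro ⟨M, hM⟩
          exact ⟨M, fun N hMN => by obtain ⟨n, hn, hd⟩ := hM N hMN; exact ⟨n, hn, hd⟩⟩
        · rintro ⟨M, hM⟩
          exact ⟨M, fun N hMN => by obtain ⟨n, hn, hd⟩ := hM N hMN; exact ⟨n, hn, hd⟩⟩
      rw [hEme]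
      refine MeasurableSet.iUnion fun M => ?_
      refine MeasurableSet.iInter fun N => ?_
      refine MeasurableSet.iInter fun _ => ?_
      refine MeasurableSet.biUnion (Finset.Icc (j + k + 1) N).countable_toSet fun n hn => ?_
      have hnk : k ≤ n := by
        have := (Finset.mem_Icc.mp hn).1; omega
      have hle : (MeasurableSpace.comap (ω n) inferInstance : MeasurableSpace Ω) ≤
          ⨆ i, ⨆ (_ : k ≤ i), MeasurableSpace.comap (ω i) inferInstance :=
        le_iSup₂ (f := fun i (_ : k ≤ i) => MeasurableSpace.comap (ω i) inferInstance) n hnk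
      exact hle _ ⟨Metric.ball y (r N), measurableSet_ball, rfl⟩
    exact measure_zero_or_one_of_measurableSet_limsup_atTop
      (fun n => (hmeas n).comap_le) hindep.iIndep ht_tail

end Aux

/-- Zero--one law for the Lebesgue measure of the uniform covering set: either almost surely
`λ(U(ω)) = 1` or almost surely `λ(U(ω)) = 0`. -/
theorem stmt9 {Ω : Type*} [MeasurableSpace Ω] (μ : Measure Ω) [IsProbabilityMeasure μ]
    (ω : ℕ → Ω → UnitAddCircle) (hmeas : ∀ n, Measurable (ω n))
    (hindep : iIndepFun ω μ)
    (hunif : ∀ n, Measure.map (ω n) μ = volume)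
    (r : ℕ → ℝ) (hrpos : ∀ n, 1 ≤ n → 0 < r n) (hrdec : Antitone r) :
    (∀ᵐ a ∂μ, volume {y : UnitAddCircle |
        ∀ᶠ N in atTop, ∃ n ∈ Finset.Icc 1 N, dist (ω n a) y < r N} = 1) ∨
    (∀ᵐ a ∂μ, volume {y : UnitAddCircle |
        ∀ᶠ N in atTop, ∃ n ∈ Finset.Icc 1 N, dist (ω n a) y < r N} = 0) := by
  classical
  set W : Set (Ω × UnitAddCircle) :=
    {p | ∀ᶠ N in atTop, ∃ n ∈ Finset.Icc 1 N, dist (ω n p.1) p.2 < r N} with hWdef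
  have hW : MeasurableSet W := by
    have : W = ⋃ M, ⋂ N, ⋂ (_ : M ≤ N),
        ⋃ n ∈ Finset.Icc 1 N, {p : Ω × UnitAddCircle | dist (ω n p.1) p.2 < r N} := by
      ext p
      simp only [hWdef, Set.mem_setOf_eq, eventually_atTop, Set.mem_iUnion, Set.mem_iInter]
      constructor
      · rintro ⟨M, hM⟩
        exact ⟨M, fun N hMN => by obtain ⟨n, hn, hd⟩ := hM N hMN; exact ⟨n, hn, hd⟩⟩
      · rintro ⟨M, hM⟩
        exact ⟨M, fun N hMN => by obtain ⟨n, hn, hd⟩ := hM N hMN; exact ⟨n, hn, hd⟩⟩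
    rw [this]
    refine MeasurableSet.iUnion fun M => ?_
    refine MeasurableSet.iInter fun N => ?_
    refine MeasurableSet.iInter fun _ => ?_
    refine MeasurableSet.biUnion (Finset.Icc 1 N).countable_toSet fun n _ => ?_
    exact measurableSet_lt (((hmeas n).comp measurable_fst).dist measurable_snd)
      measurable_const
  set c : ℝ≥0∞ := μ {a | ∀ᶠ N in atTop, ∃ n ∈ Finset.Icc 1 N, dist (ω n a) 0 < r N} with hc
  have hprod : (μ.prod volume) W = c := by
    rw [Measure.prod_apply_symm hW]
    have hfib : ∀ y : UnitAddCircle, (fun x => (x, y)) ⁻¹' W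
        = {a | ∀ᶠ N in atTop, ∃ n ∈ Finset.Icc 1 N, dist (ω n a) y < r N} := fun y => rfl
    have : ∀ y : UnitAddCircle, μ ((fun x => (x, y)) ⁻¹' W) = c := by
      intro y
      rw [hfib y, hc]
      exact measure_const_in_y μ ω hmeas hindep hunif r y 0
    rw [lintegral_congr this, lintegral_const, measure_univ, mul_one]
  have hprod2 : (μ.prod volume) W = ∫⁻ a, volume (Prod.mk a ⁻¹' W) ∂μ := by
    rw [Measure.prod_apply hW]
  have hsec : ∀ a, Prod.mk a ⁻¹' W
      = {y : UnitAddCircle | ∀ᶠ N in atTop, ∃ n ∈ Finset.Icc 1 N, dist (ω n a) y < r N} :=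
    fun a => rfl
  have hfmeas : Measurable fun a => volume (Prod.mk a ⁻¹' W) :=
    measurable_measure_prodMk_left hW
  rcases zeroOne μ ω hmeas hindep hunif r hrpos hrdec 0 with h0 | h1
  · -- measure zero case
    right
    have hint : ∫⁻ a, volume (Prod.mk a ⁻¹' W) ∂μ = 0 := by
      rw [← hprod2, hprod, hc, h0]
    have := (lintegral_eq_zero_iff hfmeas).mp hint
    filter_upwards [this] with a ha
    rw [← hsec a]
    exact ha
  · -- full measure case
    left
    have hint : ∫⁻ a, volume (Prod.mk a ⁻¹' W) ∂μ = 1 := by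
      rw [← hprod2, hprod, hc, h1]
    have hle : ∀ a, volume (Prod.mk a ⁻¹' W) ≤ 1 := fun a => prob_le_one
    have hsub : ∫⁻ a, (1 - volume (Prod.mk a ⁻¹' W)) ∂μ = 0 := by
      rw [lintegral_sub hfmeas (by rw [hint]; exact ENNReal.one_ne_top)
        (Filter.Eventually.of_forall hle), hint, lintegral_one, measure_univ, tsub_self]
    have := (lintegral_eq_zero_iff (measurable_const.sub hfmeas)).mp hsub
    filter_upwards [this] with a ha
    have h1a : (1 : ℝ≥0∞) ≤ volume (Prod.mk a ⁻¹' W) := by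
      have : (1 : ℝ≥0∞) - volume (Prod.mk a ⁻¹' W) = 0 := ha
      exact tsub_eq_zero_iff_le.mp this
    rw [← hsec a]
    exact le_antisymm (hle a) h1a
end

section
/- Let (ω_n) be i.i.d. uniform on T with ∑_{n≥1} n r_n < ∞ for a sequence of positive radii (r_n). Then almost surely U(ω) = {ω_k : k ∈ N}, i.e. the uniform covering set is countable and consists exactly of the points of the sequence. -/
open MeasureTheory ProbabilityTheory Filter Set
open scoped ENNReal Topology

attribute [local instance] ZeroLEOneClass.factZeroLtOne

/-- Probability that two independent uniform points are within `ε` is at most `2ε`. -/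
theorem aux_pair_bound {Ω : Type*} [MeasurableSpace Ω] (μ : Measure Ω) [IsProbabilityMeasure μ]
    (ω : ℕ → Ω → UnitAddCircle) (hmeas : ∀ n, Measurable (ω n))
    (hindep : iIndepFun ω μ)
    (hunif : ∀ n, Measure.map (ω n) μ = volume)
    {n m : ℕ} (hnm : n ≠ m) (ε : ℝ) :
    μ {a | dist (ω n a) (ω m a) < ε} ≤ ENNReal.ofReal (2 * ε) := by
  have hind : IndepFun (ω n) (ω m) μ := hindep.indepFun hnm
  have hmap : μ.map (fun a => (ω n a, ω m a)) = (volume : Measure UnitAddCircle).prod volume := by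
    rw [(indepFun_iff_map_prod_eq_prod_map_map (hmeas n).aemeasurable
      (hmeas m).aemeasurable).mp hind, hunif n, hunif m]
  have hS : MeasurableSet {p : UnitAddCircle × UnitAddCircle | dist p.1 p.2 < ε} :=
    measurableSet_lt (measurable_fst.dist measurable_snd) measurable_const
  have hf : Measurable fun a => (ω n a, ω m a) := (hmeas n).prodMk (hmeas m)
  have h1 : μ {a | dist (ω n a) (ω m a) < ε}
      = (volume.prod volume) {p : UnitAddCircle × UnitAddCircle | dist p.1 p.2 < ε} := by
    rw [← hmap, Measure.map_apply hf hS]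
    rfl
  rw [h1, Measure.prod_apply hS]
  have h2 : ∀ x : UnitAddCircle,
      volume (Prod.mk x ⁻¹' {p : UnitAddCircle × UnitAddCircle | dist p.1 p.2 < ε})
        ≤ ENNReal.ofReal (2 * ε) := by
    intro x
    have hsub : (Prod.mk x ⁻¹' {p : UnitAddCircle × UnitAddCircle | dist p.1 p.2 < ε})
        ⊆ Metric.closedBall x ε := by
      intro y hy
      have hxy : dist x y < ε := hy
      simp only [Metric.mem_closedBall]
      rw [dist_comm]
      exact hxy.le
    refine (measure_mono hsub).trans ?_
    rw [AddCircle.volume_closedBall]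
    exact ENNReal.ofReal_le_ofReal (min_le_right _ _)
  calc ∫⁻ x, volume (Prod.mk x ⁻¹' {p : UnitAddCircle × UnitAddCircle | dist p.1 p.2 < ε})
      ≤ ∫⁻ _, ENNReal.ofReal (2 * ε) := lintegral_mono h2
    _ = ENNReal.ofReal (2 * ε) := by simp

/-- If `∑ n r_n < ∞`, then almost surely the uniform covering set equals
exactly the set of points of the sequence. -/
theorem stmt10 {Ω : Type*} [MeasurableSpace Ω] (μ : Measure Ω) [IsProbabilityMeasure μ]
    (ω : ℕ → Ω → UnitAddCircle) (hmeas : ∀ n, Measurable (ω n))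
    (hindep : iIndepFun ω μ)
    (hunif : ∀ n, Measure.map (ω n) μ = volume)
    (r : ℕ → ℝ) (hrpos : ∀ n, 1 ≤ n → 0 < r n)
    (hsum : Summable (fun n : ℕ => (n : ℝ) * r n)) :
    ∀ᵐ a ∂μ,
      {y : UnitAddCircle | ∀ᶠ N in atTop, ∃ n ∈ Finset.Icc 1 N, dist (ω n a) y < r N}
        = {y : UnitAddCircle | ∃ k : ℕ, 1 ≤ k ∧ ω k a = y} := by
  classical
  -- block minimizers
  have hblock : ∀ j : ℕ, ∃ s : ℕ, s ∈ Finset.Ico (2 ^ j) (2 ^ (j + 1)) ∧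
      ∀ n ∈ Finset.Ico (2 ^ j) (2 ^ (j + 1)), r s ≤ r n := by
    intro j
    refine Finset.exists_min_image _ r ⟨2 ^ j, ?_⟩
    simp only [Finset.mem_Ico, le_refl, true_and]
    exact Nat.pow_lt_pow_succ Nat.one_lt_two
  choose t ht hmin using hblock
  have ht1 : ∀ j, 2 ^ j ≤ t j := fun j => (Finset.mem_Ico.mp (ht j)).1
  have ht2 : ∀ j, t j < 2 ^ (j + 1) := fun j => (Finset.mem_Ico.mp (ht j)).2
  have htpos : ∀ j, 1 ≤ t j := fun j => le_trans Nat.one_le_two_pow (ht1 j)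
  have htmono : ∀ j, t j < t (j + 1) := fun j => lt_of_lt_of_le (ht2 j) (ht1 (j + 1))
  have hrt : ∀ j, 0 < r (t j) := fun j => hrpos _ (htpos j)
  -- block sums
  set f : ℕ → ℝ := fun n => (n : ℝ) * r n with hf_def
  set a : ℕ → ℝ := fun j => ∑ n ∈ Finset.Ico (2 ^ j) (2 ^ (j + 1)), f n with ha_def
  have ha_nonneg : ∀ j, 0 ≤ a j := by
    intro j
    refine Finset.sum_nonneg fun n hn => ?_
    have hn1 : 1 ≤ n := le_trans Nat.one_le_two_pow (Finset.mem_Ico.mp hn).1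
    exact mul_nonneg (Nat.cast_nonneg n) (hrpos n hn1).le
  have h4 : ∀ j, (4 : ℝ) ^ j * r (t j) ≤ a j := by
    intro j
    have hterm : ∀ n ∈ Finset.Ico (2 ^ j) (2 ^ (j + 1)),
        (2 : ℝ) ^ j * r (t j) ≤ f n := by
      intro n hn
      have hle : ((2 ^ j : ℕ) : ℝ) ≤ (n : ℝ) := Nat.cast_le.mpr (Finset.mem_Ico.mp hn).1
      have hle' : (2 : ℝ) ^ j ≤ (n : ℝ) := by push_cast at hle; exact hle
      exact mul_le_mul hle' (hmin j n hn) (hrt j).le (Nat.cast_nonneg n)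
    have hsumge : ∑ _n ∈ Finset.Ico (2 ^ j) (2 ^ (j + 1)), ((2 : ℝ) ^ j * r (t j)) ≤ a j :=
      Finset.sum_le_sum hterm
    have hcard : (Finset.Ico (2 ^ j) (2 ^ (j + 1))).card = 2 ^ j := by
      rw [Nat.card_Ico, pow_succ]
      omega
    rw [Finset.sum_const, hcard, nsmul_eq_mul] at hsumge
    push_cast at hsumge
    have h22 : (2 : ℝ) ^ j * 2 ^ j = 4 ^ j := by
      rw [← mul_pow]; norm_num
    calc (4 : ℝ) ^ j * r (t j)
        = (2 : ℝ) ^ j * ((2 : ℝ) ^ j * r (t j)) := by rw [← h22]; ring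
      _ ≤ a j := hsumge
  have hrta : ∀ j, r (t j) ≤ a j := by
    intro j
    have h1 : (1 : ℝ) ≤ 4 ^ j := one_le_pow₀ (by norm_num)
    nlinarith [hrt j, h4 j]
  -- summability of block sums
  have hpart : ∀ J, ∑ j ∈ Finset.range J, a j = ∑ n ∈ Finset.Ico 1 (2 ^ J), f n := by
    intro J
    induction J with
    | zero => simp
    | succ J ih =>
        rw [Finset.sum_range_succ, ih, ha_def]
        exact Finset.sum_Ico_consecutive _ Nat.one_le_two_pow
          (Nat.pow_le_pow_right (by norm_num) (Nat.le_succ J))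
  have hA : Summable a := by
    refine summable_of_sum_range_le (c := ∑' n, f n) ha_nonneg fun J => ?_
    rw [hpart]
    refine Summable.sum_le_tsum _ (fun n _ => ?_) hsum
    rcases Nat.eq_zero_or_pos n with h | h
    · simp [hf_def, h]
    · exact mul_nonneg (Nat.cast_nonneg n) (hrpos n h).le
  -- the summable bound on event probabilities
  set c : ℕ → ℝ := fun j => ((t (j + 1) : ℝ) + 1) ^ 2 * (2 * (r (t j) + r (t (j + 1)))) with hc_def
  have hc_nonneg : ∀ j, 0 ≤ c j := by
    intro j
    have := hrt j
    have := hrt (j + 1)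
    positivity
  have hcle : ∀ j, c j ≤ 32 * a j + 8 * a (j + 1) := by
    intro j
    have hb : ((t (j + 1) : ℝ) + 1) ^ 2 ≤ 16 * 4 ^ j := by
      have h1 : ((t (j + 1) : ℝ) + 1) ≤ (2 : ℝ) ^ (j + 2) := by
        have := ht2 (j + 1)
        have h2 : (t (j + 1) + 1 : ℕ) ≤ 2 ^ (j + 2) := this
        calc ((t (j + 1) : ℝ) + 1) = ((t (j + 1) + 1 : ℕ) : ℝ) := by push_cast; ring
          _ ≤ ((2 ^ (j + 2) : ℕ) : ℝ) := Nat.cast_le.mpr h2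
          _ = (2 : ℝ) ^ (j + 2) := by push_cast; ring
      have h0 : (0 : ℝ) ≤ (t (j + 1) : ℝ) + 1 := by positivity
      have heq : ((2 : ℝ) ^ (j + 2)) ^ 2 = 16 * 4 ^ j := by
        calc ((2 : ℝ) ^ (j + 2)) ^ 2 = ((2 : ℝ) ^ 2) ^ (j + 2) := by
              rw [← pow_mul, ← pow_mul, Nat.mul_comm]
          _ = (4 : ℝ) ^ (j + 2) := by norm_num
          _ = 16 * 4 ^ j := by rw [pow_add]; ring
      nlinarith
    have hX : (0 : ℝ) ≤ 2 * (r (t j) + r (t (j + 1))) := by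
      have := hrt j; have := hrt (j + 1); positivity
    calc c j ≤ (16 * 4 ^ j) * (2 * (r (t j) + r (t (j + 1)))) :=
          mul_le_mul_of_nonneg_right hb hX
      _ = 32 * ((4 : ℝ) ^ j * r (t j)) + 8 * ((4 : ℝ) ^ (j + 1) * r (t (j + 1))) := by
          rw [pow_succ]; ring
      _ ≤ 32 * a j + 8 * a (j + 1) := by
          have := h4 j; have := h4 (j + 1); linarith
  have hC : Summable c :=
    Summable.of_nonneg_of_le hc_nonneg hcle
      ((hA.mul_left 32).add (((summable_nat_add_iff 1).mpr hA).mul_left 8))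
  -- the bad events
  set G : ℕ → Set Ω := fun j => {x | ∃ n, ∃ m, n ≠ m ∧ n ≤ t (j + 1) ∧ m ≤ t (j + 1) ∧
      dist (ω n x) (ω m x) < r (t j) + r (t (j + 1))} with hG_def
  have hG : ∀ j, μ (G j) ≤ ENNReal.ofReal (c j) := by
    intro j
    set P := ((Finset.range (t (j + 1) + 1)) ×ˢ (Finset.range (t (j + 1) + 1))).filter
      (fun p : ℕ × ℕ => p.1 ≠ p.2) with hP_def
    have hsub : G j ⊆ ⋃ p ∈ P, {x | dist (ω p.1 x) (ω p.2 x) < r (t j) + r (t (j + 1))} := by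
      rintro x ⟨n, m, hnm, hn, hm, hd⟩
      refine Set.mem_biUnion (show (n, m) ∈ P from ?_) hd
      simp only [hP_def, Finset.mem_filter, Finset.mem_product, Finset.mem_range]
      exact ⟨⟨Nat.lt_succ_of_le hn, Nat.lt_succ_of_le hm⟩, hnm⟩
    calc μ (G j)
        ≤ ∑ p ∈ P, μ {x | dist (ω p.1 x) (ω p.2 x) < r (t j) + r (t (j + 1))} :=
          (measure_mono hsub).trans (measure_biUnion_finset_le _ _)
      _ ≤ ∑ _p ∈ P, ENNReal.ofReal (2 * (r (t j) + r (t (j + 1)))) := by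
          refine Finset.sum_le_sum fun p hp => ?_
          exact aux_pair_bound μ ω hmeas hindep hunif (Finset.mem_filter.mp hp).2 _
      _ ≤ ∑ _p ∈ (Finset.range (t (j + 1) + 1)) ×ˢ (Finset.range (t (j + 1) + 1)),
            ENNReal.ofReal (2 * (r (t j) + r (t (j + 1)))) :=
          Finset.sum_le_sum_of_subset (Finset.filter_subset _ _)
      _ = ((t (j + 1) + 1) * (t (j + 1) + 1)) •
            ENNReal.ofReal (2 * (r (t j) + r (t (j + 1)))) := by
          rw [Finset.sum_const, Finset.card_product, Finset.card_range]
      _ ≤ ENNReal.ofReal (c j) := by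
          rw [nsmul_eq_mul, ← ENNReal.ofReal_natCast ((t (j + 1) + 1) * (t (j + 1) + 1)),
            ← ENNReal.ofReal_mul (Nat.cast_nonneg _)]
          refine ENNReal.ofReal_le_ofReal (le_of_eq ?_)
          rw [hc_def]
          push_cast
          ring
  have hsum_ne : (∑' j, μ (G j)) ≠ ∞ := by
    have hle : ∑' j, μ (G j) ≤ ∑' j, ENNReal.ofReal (c j) := ENNReal.tsum_le_tsum hG
    rw [← ENNReal.ofReal_tsum_of_nonneg hc_nonneg hC] at hle
    exact ne_top_of_le_ne_top ENNReal.ofReal_ne_top hle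
  filter_upwards [ae_eventually_notMem hsum_ne] with x hx
  obtain ⟨J, hJ⟩ := eventually_atTop.mp hx
  ext y
  simp only [Set.mem_setOf_eq]
  constructor
  · intro hy
    obtain ⟨N₀, hN₀⟩ := eventually_atTop.mp hy
    set j₀ := max J N₀ with hj₀_def
    have htlarge : ∀ j, j₀ ≤ j → N₀ ≤ t j := by
      intro j hj
      have h1 : N₀ ≤ j := le_trans (le_max_right _ _) hj
      exact le_trans h1 (le_trans (Nat.lt_two_pow_self (n := j)).le (ht1 j))
    have hex : ∀ j, ∃ n, j₀ ≤ j → n ∈ Finset.Icc 1 (t j) ∧ dist (ω n x) y < r (t j) := by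
      intro j
      by_cases hj : j₀ ≤ j
      · obtain ⟨n, hn1, hn2⟩ := hN₀ (t j) (htlarge j hj)
        exact ⟨n, fun _ => ⟨hn1, hn2⟩⟩
      · exact ⟨1, fun h => absurd h hj⟩
    choose w hw using hex
    have hstep : ∀ j, j₀ ≤ j → w (j + 1) = w j := by
      intro j hj
      by_contra hne
      apply hJ j (le_trans (le_max_left _ _) hj)
      obtain ⟨hw1, hd1⟩ := hw j hj
      obtain ⟨hw2, hd2⟩ := hw (j + 1) (le_trans hj (Nat.le_succ j))
      refine ⟨w j, w (j + 1), fun h => hne h.symm, ?_, ?_, ?_⟩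
      · exact le_trans (Finset.mem_Icc.mp hw1).2 (htmono j).le
      · exact (Finset.mem_Icc.mp hw2).2
      · calc dist (ω (w j) x) (ω (w (j + 1)) x)
            ≤ dist (ω (w j) x) y + dist y (ω (w (j + 1)) x) := dist_triangle _ _ _
          _ < r (t j) + r (t (j + 1)) := by
              rw [dist_comm y]
              exact add_lt_add hd1 hd2
    have hconst : ∀ j, j₀ ≤ j → w j = w j₀ := by
      intro j hj
      induction j, hj using Nat.le_induction with
      | base => rfl
      | succ j hj ih => rw [hstep j hj, ih]
    have hk1 : 1 ≤ w j₀ := (Finset.mem_Icc.mp (hw j₀ le_rfl).1).1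
    have hdk : ∀ j, j₀ ≤ j → dist (ω (w j₀) x) y < r (t j) := by
      intro j hj
      have h := (hw j hj).2
      rwa [hconst j hj] at h
    refine ⟨w j₀, hk1, ?_⟩
    by_contra hne
    have hdpos : 0 < dist (ω (w j₀) x) y := dist_pos.mpr hne
    obtain ⟨J', hJ'⟩ := eventually_atTop.mp
      (hA.tendsto_atTop_zero.eventually (gt_mem_nhds hdpos))
    have h1 := hdk (max j₀ J') (le_max_left _ _)
    have h2 : a (max j₀ J') < dist (ω (w j₀) x) y := hJ' _ (le_max_right _ _)
    have h3 := hrta (max j₀ J')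
    linarith
  · rintro ⟨k, hk1, rfl⟩
    refine eventually_atTop.mpr ⟨k, fun N hN => ⟨k, Finset.mem_Icc.mpr ⟨hk1, hN⟩, ?_⟩⟩
    simpa using hrpos N (le_trans hk1 hN)
end

section
/- With the notation above (i.i.d. uniform (ω_k), F_j = ∪_{k=n_{j−1}+1}^{n_j} B(ω_k, r_{n_{j+1}}), μ_{l,m} the restriction of Lebesgue measure to ∩_{j=l}^m F_j, K_{l,m} = ∏_{j=l}^m (1 − (1−2r_{n_{j+1}})^{n_j−n_{j−1}})), one has E[μ_{l,m}(T)²] ≤ K_{l,m}² ∫_T ∫_T Ψ_{l,m}(‖x−y‖) dx dy, where Ψ_{l,m}(t) = ∏_{j=l}^m (1 + ((1−2r_{n_{j+1}})^{n_j−n_{j−1}}/(1−(1−2r_{n_{j+1}})^{n_j−n_{j−1}})) · 1_{t < 2r_{n_{j+1}}}). -/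
open MeasureTheory ProbabilityTheory Filter Set
open scoped ENNReal Topology


lemma vol_ball (x : UnitAddCircle) {r : ℝ} (h0 : 0 < r) (h2 : r < 1/2) :
    volume (Metric.ball x r) = ENNReal.ofReal (2*r) := by
  rw [← measure_congr AddCircle.closedBall_ae_eq_ball, AddCircle.volume_closedBall,
    min_eq_right (by linarith)]

lemma vol_ball_compl (x : UnitAddCircle) {r : ℝ} (h0 : 0 < r) (h2 : r < 1/2) :
    volume (Metric.ball x r)ᶜ = ENNReal.ofReal (1 - 2*r) := by
  rw [measure_compl Metric.isOpen_ball.measurableSet (measure_ne_top _ _), measure_univ,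
    vol_ball x h0 h2, ← ENNReal.ofReal_one, ← ENNReal.ofReal_sub _ (by positivity)]

lemma vol_pair_le (x y : UnitAddCircle) {r : ℝ} (h0 : 0 < r) (h2 : r < 1/2) :
    (volume ((Metric.ball x r)ᶜ ∩ (Metric.ball y r)ᶜ)).toReal ≤
      if dist x y < 2*r then 1 - 2*r else (1 - 2*r)^2 := by
  split_ifs with h
  · calc (volume ((Metric.ball x r)ᶜ ∩ (Metric.ball y r)ᶜ)).toReal
        ≤ (volume (Metric.ball x r)ᶜ).toReal :=
          ENNReal.toReal_mono (measure_ne_top _ _) (measure_mono inter_subset_left)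
      _ = 1 - 2*r := by rw [vol_ball_compl x h0 h2, ENNReal.toReal_ofReal (by linarith)]
  · push_neg at h
    have hdisj : Disjoint (Metric.ball x r) (Metric.ball y r) := by
      rw [Set.disjoint_left]
      intro z hz hz'
      rw [Metric.mem_ball] at hz hz'
      have h1 := dist_triangle x z y
      rw [dist_comm x z] at h1
      linarith
    have hu : volume (Metric.ball x r ∪ Metric.ball y r) = ENNReal.ofReal (4*r) := by
      rw [measure_union hdisj Metric.isOpen_ball.measurableSet, vol_ball x h0 h2,
        vol_ball y h0 h2, ← ENNReal.ofReal_add (by positivity) (by positivity)]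
      congr 1; ring
    have h4 : 4*r ≤ 1 := by
      have h5 := measure_mono (μ := (volume : Measure UnitAddCircle)) (Set.subset_univ (Metric.ball x r ∪ Metric.ball y r))
      rw [hu, measure_univ] at h5
      exact (ENNReal.ofReal_le_one.mp h5)
    rw [← Set.compl_union, measure_compl
      (Metric.isOpen_ball.measurableSet.union Metric.isOpen_ball.measurableSet)
      (measure_ne_top _ _), measure_univ, hu, ← ENNReal.ofReal_one,
      ← ENNReal.ofReal_sub _ (by positivity), ENNReal.toReal_ofReal (by linarith)]
    nlinarith

lemma block_bound {Ω : Type*} [MeasurableSpace Ω] {μ : Measure Ω} [IsProbabilityMeasure μ]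
    {ω : ℕ → Ω → UnitAddCircle} (hmeas : ∀ k, Measurable (ω k))
    (hindep : iIndepFun ω μ)
    (hunif : ∀ k, Measure.map (ω k) μ = volume)
    {r : ℝ} (h0 : 0 < r) (h2 : r < 1/2)
    (t : Finset ℕ) (ht : t.Nonempty) (x y : UnitAddCircle) :
    μ ((⋃ k ∈ t, (ω k) ⁻¹' Metric.ball x r) ∩ (⋃ k ∈ t, (ω k) ⁻¹' Metric.ball y r)) ≤
      ENNReal.ofReal ((1 - (1-2*r)^t.card)^2 *
        (1 + (1-2*r)^t.card / (1 - (1-2*r)^t.card) *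
          (if dist x y < 2*r then (1:ℝ) else 0))) := by
  set q : ℝ := (1-2*r)^t.card with hqdef
  have hr1 : 0 < 1 - 2*r := by linarith
  have hq0 : 0 < q := pow_pos hr1 _
  have hq1 : q < 1 := pow_lt_one₀ (by linarith) (by linarith) (Finset.card_ne_zero.mpr ht)
  set A : Set Ω := ⋃ k ∈ t, (ω k) ⁻¹' Metric.ball x r with hA
  set B : Set Ω := ⋃ k ∈ t, (ω k) ⁻¹' Metric.ball y r with hB
  have hmeasA : ∀ z : UnitAddCircle, MeasurableSet (⋃ k ∈ t, (ω k) ⁻¹' Metric.ball z r) :=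
    fun z => t.measurableSet_biUnion (fun k _ => (hmeas k) Metric.isOpen_ball.measurableSet)
  -- measure of one-point complements
  have hpre : ∀ (k : ℕ) (C : Set UnitAddCircle), MeasurableSet C → μ ((ω k) ⁻¹' C) = volume C := by
    intro k C hC
    rw [← hunif k, Measure.map_apply (hmeas k) hC]
  have hcompl : ∀ z : UnitAddCircle,
      μ (⋃ k ∈ t, (ω k) ⁻¹' Metric.ball z r)ᶜ = ENNReal.ofReal (1 - 2*r) ^ t.card := by
    intro z
    have hset : (⋃ k ∈ t, (ω k) ⁻¹' Metric.ball z r)ᶜ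
        = ⋂ k ∈ t, (ω k) ⁻¹' (Metric.ball z r)ᶜ := by
      simp [Set.compl_iUnion]
    rw [hset, hindep.meas_biInter
      (fun k _ => ⟨(Metric.ball z r)ᶜ, Metric.isOpen_ball.measurableSet.compl, rfl⟩)]
    rw [Finset.prod_congr rfl (fun k _ =>
      hpre k _ Metric.isOpen_ball.measurableSet.compl), Finset.prod_const,
      vol_ball_compl z h0 h2]
  have hABc : μ (Aᶜ ∩ Bᶜ) = volume ((Metric.ball x r)ᶜ ∩ (Metric.ball y r)ᶜ) ^ t.card := by
    have hset : Aᶜ ∩ Bᶜ = ⋂ k ∈ t, (ω k) ⁻¹' ((Metric.ball x r)ᶜ ∩ (Metric.ball y r)ᶜ) := by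
      rw [hA, hB]
      ext a
      simp only [Set.compl_iUnion, Set.mem_inter_iff, Set.mem_iInter, Set.mem_compl_iff,
        Set.mem_preimage, Set.mem_iUnion, not_exists]
      constructor
      · rintro ⟨h1, h2⟩ k hk; exact ⟨h1 k hk, h2 k hk⟩
      · intro h; exact ⟨fun k hk => (h k hk).1, fun k hk => (h k hk).2⟩
    rw [hset, hindep.meas_biInter (fun k _ => ⟨_,
      (Metric.isOpen_ball.measurableSet.compl.inter Metric.isOpen_ball.measurableSet.compl),
      rfl⟩)]
    rw [Finset.prod_congr rfl (fun k _ => hpre k _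
      (Metric.isOpen_ball.measurableSet.compl.inter Metric.isOpen_ball.measurableSet.compl)),
      Finset.prod_const]
  -- real arithmetic
  have hmA : MeasurableSet A := hmeasA x
  have hmB : MeasurableSet B := hmeasA y
  have hq : (μ Aᶜ).toReal = q ∧ (μ Bᶜ).toReal = q := by
    constructor <;>
    · rw [hcompl, ENNReal.toReal_pow, ENNReal.toReal_ofReal (by linarith)]
  have hw : (μ (Aᶜ ∩ Bᶜ)).toReal ≤ (if dist x y < 2*r then 1 - 2*r else (1 - 2*r)^2) ^ t.card := by
    rw [hABc, ENNReal.toReal_pow]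
    exact pow_le_pow_left₀ ENNReal.toReal_nonneg (vol_pair_le x y h0 h2) _
  -- inclusion–exclusion
  have hunion : (μ (Aᶜ ∪ Bᶜ)).toReal + (μ (Aᶜ ∩ Bᶜ)).toReal = q + q := by
    rw [← ENNReal.toReal_add (measure_ne_top _ _) (measure_ne_top _ _),
      measure_union_add_inter _ hmB.compl,
      ENNReal.toReal_add (measure_ne_top _ _) (measure_ne_top _ _), hq.1, hq.2]
  have hAB : (μ (A ∩ B)).toReal + (μ (Aᶜ ∪ Bᶜ)).toReal = 1 := by
    rw [← ENNReal.toReal_add (measure_ne_top _ _) (measure_ne_top _ _), ← Set.compl_inter,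
      measure_add_measure_compl (hmA.inter hmB), measure_univ, ENNReal.toReal_one]
  have key : (μ (A ∩ B)).toReal ≤ (1 - q)^2 *
      (1 + q / (1 - q) * (if dist x y < 2*r then (1:ℝ) else 0)) := by
    have h1q : (1:ℝ) - q ≠ 0 := by linarith
    split_ifs at hw ⊢ with h
    · have hwq : (μ (Aᶜ ∩ Bᶜ)).toReal ≤ q := by rw [hqdef]; exact hw
      have : (1 - q)^2 * (1 + q / (1 - q) * 1) = 1 - q := by field_simp; ring
      rw [this]; linarith
    · have hwq : (μ (Aᶜ ∩ Bᶜ)).toReal ≤ q^2 := by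
        calc (μ (Aᶜ ∩ Bᶜ)).toReal ≤ ((1 - 2*r)^2) ^ t.card := hw
          _ = q^2 := by rw [hqdef]; exact pow_right_comm _ _ _
      have : (1 - q)^2 * (1 + q / (1 - q) * 0) = 1 - 2*q + q^2 := by ring
      rw [this]; linarith
  calc μ (A ∩ B) = ENNReal.ofReal ((μ (A ∩ B)).toReal) :=
        (ENNReal.ofReal_toReal (measure_ne_top _ _)).symm
    _ ≤ _ := ENNReal.ofReal_le_ofReal key
lemma meas_biInter_blocks {Ω : Type*} [MeasurableSpace Ω] {μ : Measure Ω} [IsProbabilityMeasure μ]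
    {β : Type*} [mβ : MeasurableSpace β] {f : ℕ → Ω → β}
    (hf : ∀ k, Measurable (f k)) (hind : iIndepFun f μ)
    {ι : Type*} [DecidableEq ι] (S : Finset ι) (T : ι → Finset ℕ)
    (hdisj : ∀ i ∈ S, ∀ j ∈ S, i ≠ j → Disjoint (T i) (T j))
    (s : ι → Set Ω)
    (hs : ∀ i ∈ S, MeasurableSet[⨆ k ∈ T i, MeasurableSpace.comap (f k) mβ] (s i)) :
    μ (⋂ i ∈ S, s i) = ∏ i ∈ S, μ (s i) := by
  classical
  induction S using Finset.induction_on with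
  | empty => simp
  | @insert a S ha ih =>
    have hdisj' : ∀ i ∈ S, ∀ j ∈ S, i ≠ j → Disjoint (T i) (T j) := fun i hi j hj =>
      hdisj i (Finset.mem_insert_of_mem hi) j (Finset.mem_insert_of_mem hj)
    have hs' : ∀ i ∈ S, MeasurableSet[⨆ k ∈ T i, MeasurableSpace.comap (f k) mβ] (s i) :=
      fun i hi => hs i (Finset.mem_insert_of_mem hi)
    rw [Finset.set_biInter_insert, Finset.prod_insert ha, ← ih hdisj' hs']
    -- independence of the two sigma-algebras
    have hle : ∀ k : ℕ, MeasurableSpace.comap (f k) mβ ≤ _ := fun k => (hf k).comap_le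
    have hST : Disjoint ((T a : Set ℕ)) (↑(S.biUnion T) : Set ℕ) := by
      rw [Finset.disjoint_coe, Finset.disjoint_biUnion_right]
      intro i hi
      exact hdisj a (Finset.mem_insert_self _ _) i (Finset.mem_insert_of_mem hi)
        (fun h => ha (h ▸ hi))
    have hindep2 : Indep (⨆ k ∈ (T a : Set ℕ), MeasurableSpace.comap (f k) mβ)
        (⨆ k ∈ (↑(S.biUnion T) : Set ℕ), MeasurableSpace.comap (f k) mβ) μ :=
      indep_iSup_of_disjoint hle hind.iIndep hST
    have hmsa : MeasurableSet[⨆ k ∈ (T a : Set ℕ), MeasurableSpace.comap (f k) mβ] (s a) := by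
      simpa using hs a (Finset.mem_insert_self _ _)
    have hmsb : MeasurableSet[⨆ k ∈ (↑(S.biUnion T) : Set ℕ),
        MeasurableSpace.comap (f k) mβ] (⋂ i ∈ S, s i) := by
      refine Finset.measurableSet_biInter _ (fun i hi => ?_)
      have hmono : (⨆ k ∈ T i, MeasurableSpace.comap (f k) mβ)
          ≤ ⨆ k ∈ (↑(S.biUnion T) : Set ℕ), MeasurableSpace.comap (f k) mβ := by
        refine biSup_mono (fun k hk => ?_)
        simp only [Finset.coe_biUnion, Finset.mem_coe, Set.mem_iUnion]
        exact ⟨i, hi, hk⟩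
      exact hmono _ (hs' i hi)
    exact (hindep2.indepSet_of_measurableSet hmsa hmsb).measure_inter_eq_mul

/-- Second-moment bound: `E[μ_{l,m}(T)²] ≤ K_{l,m}² ∬ Ψ_{l,m}(‖x-y‖) dx dy`, where
`μ_{l,m}` is Lebesgue measure restricted to `∩_{j=l}^m F_j`. -/
theorem stmt14 {Ω : Type*} [MeasurableSpace Ω] (μ : Measure Ω) [IsProbabilityMeasure μ]
    (ω : ℕ → Ω → UnitAddCircle) (hmeas : ∀ k, Measurable (ω k))
    (hindep : iIndepFun ω μ)
    (hunif : ∀ k, Measure.map (ω k) μ = volume)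
    (r : ℕ → ℝ) (hr0 : ∀ k, 0 < r k) (hr2 : ∀ k, r k < 1/2)
    (n : ℕ → ℕ) (hn : StrictMono n)
    (l m : ℕ) (hl : 1 ≤ l) (hlm : l ≤ m)
    (q : ℕ → ℝ) (hq : ∀ j, q j = (1 - 2 * r (n (j + 1))) ^ (n j - n (j - 1))) :
    ∫⁻ a, (volume (⋂ j ∈ Finset.Icc l m,
        ⋃ k ∈ Finset.Ioc (n (j - 1)) (n j), Metric.ball (ω k a) (r (n (j + 1))))) ^ 2 ∂μ
      ≤ (∏ j ∈ Finset.Icc l m, ENNReal.ofReal (1 - q j)) ^ 2 *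
        ∫⁻ x : UnitAddCircle, ∫⁻ y : UnitAddCircle,
          ∏ j ∈ Finset.Icc l m,
            ENNReal.ofReal (1 + q j / (1 - q j) *
              (if dist x y < 2 * r (n (j + 1)) then (1:ℝ) else 0)) := by
  classical
  set M : Set (Ω × (UnitAddCircle × UnitAddCircle)) :=
    {p | (p.2.1 ∈ ⋂ j ∈ Finset.Icc l m,
        ⋃ k ∈ Finset.Ioc (n (j - 1)) (n j), Metric.ball (ω k p.1) (r (n (j + 1)))) ∧
      (p.2.2 ∈ ⋂ j ∈ Finset.Icc l m,
        ⋃ k ∈ Finset.Ioc (n (j - 1)) (n j), Metric.ball (ω k p.1) (r (n (j + 1))))}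
    with hMdef
  -- measurability of M
  have base : ∀ (g : Ω × (UnitAddCircle × UnitAddCircle) → UnitAddCircle), Measurable g →
      MeasurableSet {p : Ω × (UnitAddCircle × UnitAddCircle) |
        g p ∈ ⋂ j ∈ Finset.Icc l m,
          ⋃ k ∈ Finset.Ioc (n (j - 1)) (n j), Metric.ball (ω k p.1) (r (n (j + 1)))} := by
    intro g hg
    have hset : {p : Ω × (UnitAddCircle × UnitAddCircle) |
        g p ∈ ⋂ j ∈ Finset.Icc l m,
          ⋃ k ∈ Finset.Ioc (n (j - 1)) (n j), Metric.ball (ω k p.1) (r (n (j + 1)))}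
        = ⋂ j ∈ Finset.Icc l m, ⋃ k ∈ Finset.Ioc (n (j - 1)) (n j),
            {p : Ω × (UnitAddCircle × UnitAddCircle) |
              dist (g p) (ω k p.1) < r (n (j + 1))} := by
      ext p
      simp [Metric.mem_ball]
    rw [hset]
    exact Finset.measurableSet_biInter _ fun j _ => Finset.measurableSet_biUnion _ fun k _ =>
      measurableSet_lt (hg.dist ((hmeas k).comp measurable_fst)) measurable_const
  have hMmeas : MeasurableSet M :=
    (base _ measurable_snd.fst).inter (base _ measurable_snd.snd)
  -- per-(x,y) bound
  have hq1 : ∀ j, 0 ≤ 1 - q j := by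
    intro j
    rw [hq j]
    have := hr0 (n (j+1)); have := hr2 (n (j+1))
    have : (1 - 2 * r (n (j + 1))) ^ (n j - n (j - 1)) ≤ 1 :=
      pow_le_one₀ (by linarith) (by linarith)
    linarith
  have hkey : ∀ x y : UnitAddCircle,
      μ (⋂ j ∈ Finset.Icc l m,
          ((⋃ k ∈ Finset.Ioc (n (j - 1)) (n j), (ω k) ⁻¹' Metric.ball x (r (n (j + 1)))) ∩
           (⋃ k ∈ Finset.Ioc (n (j - 1)) (n j), (ω k) ⁻¹' Metric.ball y (r (n (j + 1))))))
        ≤ (∏ j ∈ Finset.Icc l m, ENNReal.ofReal (1 - q j)) ^ 2 *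
          ∏ j ∈ Finset.Icc l m, ENNReal.ofReal (1 + q j / (1 - q j) *
            (if dist x y < 2 * r (n (j + 1)) then (1:ℝ) else 0)) := by
    intro x y
    have hdisj : ∀ i ∈ Finset.Icc l m, ∀ j ∈ Finset.Icc l m, i ≠ j →
        Disjoint (Finset.Ioc (n (i - 1)) (n i)) (Finset.Ioc (n (j - 1)) (n j)) := by
      intro i hi j hj hne
      rw [Finset.mem_Icc] at hi hj
      rw [Finset.disjoint_left]
      intro k hk hk'
      rw [Finset.mem_Ioc] at hk hk'
      rcases lt_or_gt_of_ne hne with h | h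
      · have : n i ≤ n (j-1) := hn.monotone (by omega)
        omega
      · have : n j ≤ n (i-1) := hn.monotone (by omega)
        omega
    have hmb : ∀ j ∈ Finset.Icc l m,
        MeasurableSet[⨆ k ∈ Finset.Ioc (n (j - 1)) (n j),
          MeasurableSpace.comap (ω k) inferInstance]
          ((⋃ k ∈ Finset.Ioc (n (j - 1)) (n j), (ω k) ⁻¹' Metric.ball x (r (n (j + 1)))) ∩
           (⋃ k ∈ Finset.Ioc (n (j - 1)) (n j), (ω k) ⁻¹' Metric.ball y (r (n (j + 1))))) := by
      intro j hj
      have hsub : ∀ z : UnitAddCircle,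
          MeasurableSet[⨆ k ∈ Finset.Ioc (n (j - 1)) (n j),
            MeasurableSpace.comap (ω k) inferInstance]
            (⋃ k ∈ Finset.Ioc (n (j - 1)) (n j), (ω k) ⁻¹' Metric.ball z (r (n (j + 1)))) := by
        intro z
        refine Finset.measurableSet_biUnion _ (fun k hk => ?_)
        have hle : MeasurableSpace.comap (ω k) inferInstance
            ≤ ⨆ k ∈ Finset.Ioc (n (j - 1)) (n j),
                MeasurableSpace.comap (ω k) inferInstance :=
          le_iSup₂ (f := fun (k : ℕ) (_ : k ∈ Finset.Ioc (n (j - 1)) (n j)) =>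
            MeasurableSpace.comap (ω k) inferInstance) k hk
        exact hle _ ⟨Metric.ball z (r (n (j + 1))), Metric.isOpen_ball.measurableSet, rfl⟩
      exact (hsub x).inter (hsub y)
    rw [meas_biInter_blocks hmeas hindep (Finset.Icc l m) _ hdisj _ hmb]
    calc ∏ j ∈ Finset.Icc l m, μ
          ((⋃ k ∈ Finset.Ioc (n (j - 1)) (n j), (ω k) ⁻¹' Metric.ball x (r (n (j + 1)))) ∩
           (⋃ k ∈ Finset.Ioc (n (j - 1)) (n j), (ω k) ⁻¹' Metric.ball y (r (n (j + 1)))))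
        ≤ ∏ j ∈ Finset.Icc l m, ENNReal.ofReal ((1 - q j)^2 *
            (1 + q j / (1 - q j) * (if dist x y < 2 * r (n (j + 1)) then (1:ℝ) else 0))) := by
          refine Finset.prod_le_prod' (fun j hj => ?_)
          have hj1 : 1 ≤ j := le_trans hl (Finset.mem_Icc.mp hj).1
          have hne : (Finset.Ioc (n (j - 1)) (n j)).Nonempty :=
            Finset.nonempty_Ioc.mpr (hn (by omega))
          have hb := block_bound hmeas hindep hunif (hr0 (n (j+1))) (hr2 (n (j+1)))
            (Finset.Ioc (n (j - 1)) (n j)) hne x y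
          rw [Nat.card_Ioc] at hb
          rw [hq j]
          exact hb
      _ = (∏ j ∈ Finset.Icc l m, ENNReal.ofReal (1 - q j)) ^ 2 *
          ∏ j ∈ Finset.Icc l m, ENNReal.ofReal (1 + q j / (1 - q j) *
            (if dist x y < 2 * r (n (j + 1)) then (1:ℝ) else 0)) := by
          rw [← Finset.prod_pow, ← Finset.prod_mul_distrib]
          refine Finset.prod_congr rfl (fun j hj => ?_)
          rw [ENNReal.ofReal_mul (sq_nonneg _), ENNReal.ofReal_pow (hq1 j)]
  -- identification of sections of M
  have hpreE : ∀ x y : UnitAddCircle, ((fun a => (a, (x, y))) ⁻¹' M)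
      = ⋂ j ∈ Finset.Icc l m,
          ((⋃ k ∈ Finset.Ioc (n (j - 1)) (n j), (ω k) ⁻¹' Metric.ball x (r (n (j + 1)))) ∩
           (⋃ k ∈ Finset.Ioc (n (j - 1)) (n j), (ω k) ⁻¹' Metric.ball y (r (n (j + 1))))) := by
    intro x y
    ext a
    simp only [hMdef, Set.mem_preimage, Set.mem_setOf_eq, Set.mem_iInter, Set.mem_iUnion,
      Set.mem_inter_iff, Metric.mem_ball, dist_comm]
    constructor
    · rintro ⟨h1, h2⟩ j hj
      exact ⟨h1 j hj, h2 j hj⟩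
    · intro h
      exact ⟨fun j hj => (h j hj).1, fun j hj => (h j hj).2⟩
  have hC : ((∏ j ∈ Finset.Icc l m, ENNReal.ofReal (1 - q j)) ^ 2) ≠ ⊤ :=
    ENNReal.pow_ne_top (ENNReal.prod_lt_top (fun j _ => ENNReal.ofReal_lt_top)).ne
  calc ∫⁻ a, (volume (⋂ j ∈ Finset.Icc l m,
        ⋃ k ∈ Finset.Ioc (n (j - 1)) (n j), Metric.ball (ω k a) (r (n (j + 1))))) ^ 2 ∂μ
      = ∫⁻ a, (volume.prod (volume : Measure UnitAddCircle)) (Prod.mk a ⁻¹' M) ∂μ := by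
        refine lintegral_congr (fun a => ?_)
        rw [show Prod.mk a ⁻¹' M
            = (⋂ j ∈ Finset.Icc l m, ⋃ k ∈ Finset.Ioc (n (j - 1)) (n j),
                Metric.ball (ω k a) (r (n (j + 1)))) ×ˢ
              (⋂ j ∈ Finset.Icc l m, ⋃ k ∈ Finset.Ioc (n (j - 1)) (n j),
                Metric.ball (ω k a) (r (n (j + 1)))) from rfl,
          Measure.prod_prod, sq]
    _ = (μ.prod ((volume : Measure UnitAddCircle).prod volume)) M :=
        (Measure.prod_apply hMmeas).symm
    _ = ∫⁻ z : UnitAddCircle × UnitAddCircle, μ ((fun a => (a, z)) ⁻¹' M)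
          ∂((volume : Measure UnitAddCircle).prod volume) :=
        Measure.prod_apply_symm hMmeas
    _ = ∫⁻ x : UnitAddCircle, ∫⁻ y : UnitAddCircle, μ ((fun a => (a, (x, y))) ⁻¹' M) :=
        lintegral_prod _ (measurable_measure_prodMk_right hMmeas).aemeasurable
    _ ≤ ∫⁻ x : UnitAddCircle, ∫⁻ y : UnitAddCircle,
          (∏ j ∈ Finset.Icc l m, ENNReal.ofReal (1 - q j)) ^ 2 *
          ∏ j ∈ Finset.Icc l m, ENNReal.ofReal (1 + q j / (1 - q j) *
            (if dist x y < 2 * r (n (j + 1)) then (1:ℝ) else 0)) := by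
        refine lintegral_mono (fun x => lintegral_mono (fun y => ?_))
        rw [hpreE x y]
        exact hkey x y
    _ = (∏ j ∈ Finset.Icc l m, ENNReal.ofReal (1 - q j)) ^ 2 *
        ∫⁻ x : UnitAddCircle, ∫⁻ y : UnitAddCircle,
          ∏ j ∈ Finset.Icc l m, ENNReal.ofReal (1 + q j / (1 - q j) *
            (if dist x y < 2 * r (n (j + 1)) then (1:ℝ) else 0)) := by
        simp_rw [lintegral_const_mul' _ _ hC]
end
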